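/- arXiv:2505.05179 — 2 statements merged into one kernel-verified Lean document; each statement's English description precedes it below -/
import Mathlib

section
/- Every locally finite tree (connected acyclic simple graph in which every vertex has a finite neighbor set) is H-rigid. -/
open SimpleGraph

/-- The link of a set `S` of vertices: all vertices adjacent to every vertex of `S`.
(For `S = ∅` this is all of `V`.) -/
def link {V : Type*} (G : SimpleGraph V) (S : Set V) : Set V :=
  {v : V | ∀ s ∈ S, G.Adj v s}

/-- A nonempty set of vertices is internal if its link is not a clique. -/
def IsInternalSet {V : Type*} (G : SimpleGraph V) (S : Set V) : Prop :=
  S.Nonempty ∧ ¬ G.IsClique (link G S)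

/-- A vertex is internal if its neighborhood is not a clique. -/
def IsInternalVertex {V : Type*} (G : SimpleGraph V) (v : V) : Prop :=
  ¬ G.IsClique (G.neighborSet v)

/-- The induced subgraph on the internal vertices. -/
def intGraph {V : Type*} (G : SimpleGraph V) :
    SimpleGraph ↥{v : V | IsInternalVertex G v} :=
  G.induce {v : V | IsInternalVertex G v}

/-- A graph is H-rigid if it is locally finite, all its internal sets are singletons,
and every nonempty finite set of vertices with nonempty link induces a subgraph all of
whose connected components are complete. -/
def HRigid {V : Type*} (G : SimpleGraph V) : Prop :=
  (∀ v : V, (G.neighborSet v).Finite) ∧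
  (∀ S : Set V, IsInternalSet G S → ∃ v : V, S = {v}) ∧
  (∀ S : Set V, S.Finite → S.Nonempty → (link G S).Nonempty →
    ∀ u w : ↥S, (G.induce S).Reachable u w → u = w ∨ (G.induce S).Adj u w)

/-- The eccentricity of a vertex: the sup of extended graph distances to all vertices. -/
noncomputable def eccentricity {V : Type*} (G : SimpleGraph V) (t : V) : ℕ∞ :=
  ⨆ s : V, G.edist t s

/-- The radius of a graph, valued in `ℕ∞`. -/
noncomputable def graphRadius {V : Type*} (G : SimpleGraph V) : ℕ∞ :=
  ⨅ t : V, eccentricity G t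

/-- The infinite line graph on `ℤ`: `i` and `j` adjacent iff `|i - j| = 1`. -/
def lineZ : SimpleGraph ℤ where
  Adj i j := |i - j| = 1
  symm := ⟨fun i j (h : |i - j| = 1) => show |j - i| = 1 by rwa [abs_sub_comm]⟩
  loopless := ⟨fun i (h : |i - i| = 1) => by simp at h⟩

/-- The cycle graph on `ZMod n`: `i` and `j` adjacent iff `i - j = 1` or `j - i = 1`. -/
def cycleZMod (n : ℕ) : SimpleGraph (ZMod n) :=
  SimpleGraph.circulantGraph ({1} : Set (ZMod n))

/-- Every locally finite tree is H-rigid. -/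
theorem stmt5 {V : Type*} (G : SimpleGraph V) (htree : G.IsTree)
    (hlf : ∀ v : V, (G.neighborSet v).Finite) : HRigid G := by
  refine ⟨hlf, ?_, ?_⟩
  · -- internal sets are singletons
    rintro S ⟨⟨s, hs⟩, hnc⟩
    refine ⟨s, Set.eq_singleton_iff_unique_mem.mpr ⟨hs, fun t ht => ?_⟩⟩
    by_contra hts
    rw [SimpleGraph.isClique_iff, Set.Pairwise] at hnc
    push_neg at hnc
    obtain ⟨u, hu, w, hw, huw, hnadj⟩ := hnc
    have h1 : G.Adj u s := hu s hs
    have h2 : G.Adj s w := (hw s hs).symm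
    have h3 : G.Adj u t := hu t ht
    have h4 : G.Adj t w := (hw t ht).symm
    have hq1 : (Walk.cons h1 (Walk.cons h2 Walk.nil) : G.Walk u w).IsPath := by
      rw [Walk.cons_isPath_iff, Walk.cons_isPath_iff]
      refine ⟨⟨Walk.IsPath.nil, by simp [h2.ne]⟩, ?_⟩
      simp [h1.ne, huw]
    have hq2 : (Walk.cons h3 (Walk.cons h4 Walk.nil) : G.Walk u w).IsPath := by
      rw [Walk.cons_isPath_iff, Walk.cons_isPath_iff]
      refine ⟨⟨Walk.IsPath.nil, by simp [h4.ne]⟩, ?_⟩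
      simp [h3.ne, huw]
    have heq := (htree.existsUnique_path u w).unique hq1 hq2
    have := congrArg Walk.support heq
    simp only [Walk.support_cons, Walk.support_nil] at this
    have hts' : t = s := by
      have h' := this.symm
      simp only [List.cons.injEq] at h'
      exact h'.2.1
    exact hts hts'
  · -- components of induced subgraphs are complete
    rintro S _ _ ⟨v, hv⟩ u w h
    by_cases huw : u = w
    · exact Or.inl huw
    · exfalso
      classical
      obtain ⟨wk⟩ := h
      have hp0 := wk.bypass_isPath
      set p0 := wk.bypass with hp0def
      have hvS : v ∉ S := fun hvS => (G.loopless.irrefl v (hv v hvS))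
      let f := (SimpleGraph.Embedding.induce (G := G) S).toHom
      have hinj : Function.Injective f := Subtype.val_injective
      have hp' : (p0.map f).IsPath := Walk.map_isPath_of_injective hinj hp0
      have hadj1 : G.Adj (u : V) v := (hv u u.2).symm
      have hadj2 : G.Adj v (w : V) := hv w w.2
      have huw' : (u : V) ≠ (w : V) := fun h => huw (Subtype.ext h)
      have hq : (Walk.cons hadj1 (Walk.cons hadj2 Walk.nil) : G.Walk (u : V) (w : V)).IsPath := by
        rw [Walk.cons_isPath_iff, Walk.cons_isPath_iff]
        refine ⟨⟨Walk.IsPath.nil, by simp [hadj2.ne]⟩, ?_⟩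
        simp [hadj1.ne, huw']
      have heq := (htree.existsUnique_path (u : V) (w : V)).unique hp' hq
      have hmem : v ∈ (p0.map f).support := by rw [heq]; exact (by simp : v ∈ (Walk.cons hadj1 (Walk.cons hadj2 Walk.nil) : G.Walk (u : V) (w : V)).support)
      rw [Walk.support_map] at hmem
      obtain ⟨x, _, hx⟩ := List.mem_map.mp hmem
      exact hvS (hx ▸ x.2)
end

section
/- Let Γ be a simple graph and let u and w be internal vertices of Γ. Then the extended graph distance between u and w computed in the induced subgraph Int(Γ) on the internal vertices equals their extended graph distance computed in Γ (both valued in ℕ∞). -/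
open SimpleGraph

lemma edist_step {V : Type*} (G : SimpleGraph V) {u w : V} {n : ℕ}
    (h : G.edist u w = (n + 1 : ℕ)) : ∃ x, G.Adj u x ∧ G.edist x w = n := by
  obtain ⟨p, hp⟩ := SimpleGraph.exists_walk_of_edist_eq_coe h
  cases p with
  | nil => simp at hp
  | cons hadj q =>
    rename_i x
    refine ⟨x, hadj, ?_⟩
    have hq : q.length = n := by
      simpa using hp
    have h1 : G.edist x w ≤ n := hq ▸ SimpleGraph.edist_le q
    obtain ⟨m, hm, hmn⟩ := ENat.le_coe_iff.mp h1
    have ht := SimpleGraph.edist_triangle (G := G) (u := u) (v := x) (w := w)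
    have hux : G.edist u x ≤ 1 := by
      simpa using SimpleGraph.edist_le hadj.toWalk
    have h3 : ((n + 1 : ℕ) : ℕ∞) ≤ ((1 + m : ℕ) : ℕ∞) := by
      rw [← h]
      refine ht.trans ?_
      rw [hm]
      push_cast
      gcongr
    have h4 : n ≤ m := by
      have := Nat.cast_le.mp h3
      omega
    rw [hm]
    exact_mod_cast le_antisymm hmn h4

lemma intGraph_adj {V : Type*} (G : SimpleGraph V) {u x : V}
    (hu : IsInternalVertex G u) (hx : IsInternalVertex G x) (h : G.Adj u x) :
    (intGraph G).Adj ⟨u, hu⟩ ⟨x, hx⟩ := h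

lemma intGraph_edist_le {V : Type*} (G : SimpleGraph V) : ∀ (n : ℕ) (u w : V)
    (hu : IsInternalVertex G u) (hw : IsInternalVertex G w),
    G.edist u w = n → (intGraph G).edist ⟨u, hu⟩ ⟨w, hw⟩ ≤ n := by
  intro n
  induction n with
  | zero =>
    intro u w hu hw h
    rw [Nat.cast_zero, SimpleGraph.edist_eq_zero_iff] at h
    subst h
    simp [SimpleGraph.edist_self]
  | succ n ih =>
    intro u w hu hw h
    match n, ih with
    | 0, _ =>
      have : G.Adj u w := SimpleGraph.edist_eq_one_iff_adj.mp (by exact_mod_cast h)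
      have := SimpleGraph.edist_le (intGraph_adj G hu hw this).toWalk
      simpa using this
    | n + 1, ih =>
      obtain ⟨x, hux, hxw⟩ := edist_step G h
      obtain ⟨y, hxy, hyw⟩ := edist_step G hxw
      have hxint : IsInternalVertex G x := by
        intro hclique
        have huy : u ≠ y := by
          intro he
          subst he
          rw [hyw] at h
          exact absurd (by exact_mod_cast h : n = n + 2) (by omega)
        have : G.Adj u y := hclique hux.symm hxy huy
        have h1 : G.edist u w ≤ 1 + n := by
          calc G.edist u w ≤ G.edist u y + G.edist y w := SimpleGraph.edist_triangle
            _ ≤ 1 + n := by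
              rw [hyw]
              gcongr
              simpa using SimpleGraph.edist_le this.toWalk
        rw [h] at h1
        have h2 : ((n + 2 : ℕ) : ℕ∞) ≤ ((1 + n : ℕ) : ℕ∞) := by
          push_cast
          convert h1 using 1
          push_cast; ring
        exact absurd (Nat.cast_le.mp h2) (by omega)
      have hstep := SimpleGraph.edist_le (intGraph_adj G hu hxint hux).toWalk
      calc (intGraph G).edist ⟨u, hu⟩ ⟨w, hw⟩
          ≤ (intGraph G).edist ⟨u, hu⟩ ⟨x, hxint⟩ + (intGraph G).edist ⟨x, hxint⟩ ⟨w, hw⟩ :=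
            SimpleGraph.edist_triangle
        _ ≤ 1 + (n + 1 : ℕ) := by
            gcongr
            · simpa using hstep
            · exact ih x w hxint hw hxw
        _ = ((n + 2 : ℕ) : ℕ∞) := by push_cast; ring

/-- For internal vertices `u, w`, the extended distance computed in the
internal graph equals the extended distance computed in the whole graph. -/
theorem stmt19 {V : Type*} (G : SimpleGraph V) (u w : V)
    (hu : IsInternalVertex G u) (hw : IsInternalVertex G w) :
    (intGraph G).edist ⟨u, hu⟩ ⟨w, hw⟩ = G.edist u w := by
  apply le_antisymm
  · cases h : G.edist u w with
    | top => exact le_top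
    | coe n => exact intGraph_edist_le G n u w hu hw h
  · cases h : (intGraph G).edist ⟨u, hu⟩ ⟨w, hw⟩ with
    | top => exact le_top
    | coe n =>
      obtain ⟨p, hp⟩ := SimpleGraph.exists_walk_of_edist_eq_coe h
      have := SimpleGraph.edist_le
        (p.map (SimpleGraph.Embedding.induce {v : V | IsInternalVertex G v}).toHom)
      erw [SimpleGraph.Walk.length_map, hp] at this
      exact this
end
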